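/- Let F : ℝ → ℝ be Lipschitz with constant M, let A ⊆ ℝ be measurable with positive measure, let x₀ ∈ A be a Lebesgue density point of A at which F is differentiable, and let ω ∈ S¹ with ω·(1, F'(x₀)) ≠ 0. Then for all sufficiently small ε > 0, the set {ω·(x, F(x)) : x ∈ A, |x − x₀| ≤ ε} ⊆ ℝ has positive Lebesgue measure. -/

import Mathlib

open MeasureTheory
open scoped ENNReal NNReal

/-- The dot product on ℝ². -/
def dot (x y : ℝ × ℝ) : ℝ := x.1 * y.1 + x.2 * y.2

/-- If `x₀` is a Lebesgue density point of `A` at which the Lipschitz function `F` is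
differentiable and `ω·(1, F'(x₀)) ≠ 0`, then the projection in direction `ω` of the
graph of `F` over `A ∩ [x₀−ε, x₀+ε]` has positive Lebesgue measure for all small
`ε > 0`. -/
theorem stmt18 (F : ℝ → ℝ) (M : ℝ≥0) (hF : LipschitzWith M F)
    (A : Set ℝ) (hA : MeasurableSet A) (hApos : 0 < volume A)
    (x₀ : ℝ) (hx₀ : x₀ ∈ A)
    (hdens : Filter.Tendsto
      (fun r : ℝ => volume (A ∩ Set.Icc (x₀ - r) (x₀ + r)) / ENNReal.ofReal (2 * r))
      (nhdsWithin 0 (Set.Ioi 0)) (nhds 1))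
    (hdiff : DifferentiableAt ℝ F x₀)
    (ω : ℝ × ℝ) (hω : dot ω ω = 1) (hne : dot ω (1, deriv F x₀) ≠ 0) :
    ∃ ε₀ > (0 : ℝ), ∀ ε : ℝ, 0 < ε → ε ≤ ε₀ →
      0 < volume ((fun x => dot (x, F x) ω) '' (A ∩ Set.Icc (x₀ - ε) (x₀ + ε))) := by
  classical
  set g : ℝ → ℝ := fun x => dot (x, F x) ω with hgdef
  have hgx : ∀ x, g x = x * ω.1 + F x * ω.2 := fun x => rfl
  set c : ℝ := dot ω (1, deriv F x₀) with hcdef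
  have hc : 0 < |c| := abs_pos.mpr hne
  set κ : ℝ := |c| / 2 with hκdef
  have hκ : 0 < κ := by positivity
  -- Lipschitz constant for g
  set L : ℝ≥0 := ‖ω.1‖₊ + ‖ω.2‖₊ * M with hLdef
  have hLr : (L : ℝ) = |ω.1| + |ω.2| * M := by
    simp [hLdef, Real.norm_eq_abs]
  have hg : LipschitzWith L g := by
    apply LipschitzWith.of_dist_le_mul
    intro x y
    rw [Real.dist_eq, Real.dist_eq, hgx, hgx]
    have hFd : |F x - F y| ≤ (M : ℝ) * |x - y| := by
      have := hF.dist_le_mul x y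
      rwa [Real.dist_eq, Real.dist_eq] at this
    have : x * ω.1 + F x * ω.2 - (y * ω.1 + F y * ω.2)
        = (x - y) * ω.1 + (F x - F y) * ω.2 := by ring
    rw [this, hLr]
    calc |(x - y) * ω.1 + (F x - F y) * ω.2|
        ≤ |(x - y) * ω.1| + |(F x - F y) * ω.2| := abs_add_le _ _
      _ = |x - y| * |ω.1| + |F x - F y| * |ω.2| := by rw [abs_mul, abs_mul]
      _ ≤ |x - y| * |ω.1| + ((M : ℝ) * |x - y|) * |ω.2| := by
          gcongr
      _ = (|ω.1| + |ω.2| * M) * |x - y| := by ring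
  -- derivative of g at x₀
  have hderiv : HasDerivAt g c x₀ := by
    have h1 : HasDerivAt (fun x : ℝ => x * ω.1) ω.1 x₀ := by
      simpa using (hasDerivAt_id x₀).mul_const ω.1
    have h2 : HasDerivAt (fun x : ℝ => F x * ω.2) (deriv F x₀ * ω.2) x₀ :=
      hdiff.hasDerivAt.mul_const ω.2
    have := h1.add h2
    have hceq : c = ω.1 + deriv F x₀ * ω.2 := by
      simp [hcdef, dot]; ring
    rw [hceq]
    exact this
  -- little-o estimate
  rw [hasDerivAt_iff_isLittleO] at hderiv
  have hlo := hderiv.def hκ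
  rw [Metric.eventually_nhds_iff] at hlo
  obtain ⟨ε₂, hε₂, hball⟩ := hlo
  -- density estimate
  set η : ℝ := κ / (4 * ((L : ℝ) + 1)) with hηdef
  have hLnn : (0 : ℝ) ≤ (L : ℝ) := L.coe_nonneg
  have hη : 0 < η := by positivity
  have h1η : (1 : ℝ≥0∞) - ENNReal.ofReal η < 1 :=
    ENNReal.sub_lt_self ENNReal.one_ne_top one_ne_zero
      (by simpa using ENNReal.ofReal_pos.mpr hη)
  have hev := hdens.eventually (eventually_gt_nhds h1η)
  obtain ⟨ε₁, hε₁, hdball⟩ := Metric.mem_nhdsWithin_iff.mp hev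
  refine ⟨min (ε₂ / 2) (ε₁ / 2), by positivity, ?_⟩
  intro ε hεpos hεle
  have hεε₂ : ε < ε₂ := lt_of_le_of_lt (hεle.trans (min_le_left _ _)) (by linarith)
  have hεε₁ : ε < ε₁ := lt_of_le_of_lt (hεle.trans (min_le_right _ _)) (by linarith)
  set S : Set ℝ := A ∩ Set.Icc (x₀ - ε) (x₀ + ε) with hSdef
  -- Step A: expansion estimate near x₀
  have hexp : ∀ x : ℝ, |x - x₀| ≤ ε → κ * |x - x₀| ≤ |g x - g x₀| := by
    intro x hx
    have hdx : dist x x₀ < ε₂ := by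
      rw [Real.dist_eq]; exact lt_of_le_of_lt hx hεε₂
    have hb := hball hdx
    simp only [Real.norm_eq_abs, smul_eq_mul] at hb
    have key : |(x - x₀) * c| - |g x - g x₀| ≤ |g x - g x₀ - (x - x₀) * c| := by
      have h := abs_sub_abs_le_abs_sub ((x - x₀) * c) (g x - g x₀)
      have e : |(x - x₀) * c - (g x - g x₀)| = |g x - g x₀ - (x - x₀) * c| :=
        abs_sub_comm _ _
      linarith
    have h2 : |(x - x₀) * c| = |x - x₀| * |c| := abs_mul _ _
    have h3 : κ * |x - x₀| = |x - x₀| * |c| - κ * |x - x₀| := by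
      rw [hκdef]; ring
    linarith
  -- Step B: density bound for the complement
  have hIccvol : volume (Set.Icc (x₀ - ε) (x₀ + ε)) = ENNReal.ofReal (2 * ε) := by
    rw [Real.volume_Icc]; ring_nf
  have hcompl : volume (Set.Icc (x₀ - ε) (x₀ + ε) \ A) ≤ ENNReal.ofReal (η * (2 * ε)) := by
    have hεmem : dist ε (0 : ℝ) < ε₁ := by
      rw [Real.dist_eq, sub_zero, abs_of_pos hεpos]; exact hεε₁
    have hrat := hdball ⟨Metric.mem_ball.mpr hεmem, Set.mem_Ioi.mpr hεpos⟩
    have h2ε : ENNReal.ofReal (2 * ε) ≠ 0 := by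
      simp [ENNReal.ofReal_pos.mpr (by linarith : (0:ℝ) < 2 * ε), ne_of_gt, hεpos]
    have h2ε' : ENNReal.ofReal (2 * ε) ≠ ∞ := ENNReal.ofReal_ne_top
    have hmul : ((1 : ℝ≥0∞) - ENNReal.ofReal η) * ENNReal.ofReal (2 * ε)
        < volume (A ∩ Set.Icc (x₀ - ε) (x₀ + ε)) :=
      (ENNReal.lt_div_iff_mul_lt (Or.inl h2ε) (Or.inl h2ε')).mp hrat
    have hsum : volume (Set.Icc (x₀ - ε) (x₀ + ε) ∩ A)
        + volume (Set.Icc (x₀ - ε) (x₀ + ε) \ A) = ENNReal.ofReal (2 * ε) := by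
      rw [measure_inter_add_diff _ hA, hIccvol]
    have hAIcc : volume (Set.Icc (x₀ - ε) (x₀ + ε) ∩ A)
        = volume (A ∩ Set.Icc (x₀ - ε) (x₀ + ε)) := by rw [Set.inter_comm]
    -- lower bound on the intersection
    have hlow : ((1 : ℝ≥0∞) - ENNReal.ofReal η) * ENNReal.ofReal (2 * ε)
        ≤ volume (Set.Icc (x₀ - ε) (x₀ + ε) ∩ A) := by
      rw [hAIcc]; exact le_of_lt hmul
    have hsubmul : ((1 : ℝ≥0∞) - ENNReal.ofReal η) * ENNReal.ofReal (2 * ε)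
        = ENNReal.ofReal (2 * ε) - ENNReal.ofReal (η * (2 * ε)) := by
      rw [ENNReal.sub_mul (fun _ _ => ENNReal.ofReal_ne_top), one_mul,
        ← ENNReal.ofReal_mul (le_of_lt hη)]
    have hfin : volume (Set.Icc (x₀ - ε) (x₀ + ε) ∩ A) ≠ ∞ :=
      ne_top_of_le_ne_top ENNReal.ofReal_ne_top
        (le_trans (le_add_right le_rfl) (le_of_eq hsum))
    have hb : volume (Set.Icc (x₀ - ε) (x₀ + ε) \ A)
        = ENNReal.ofReal (2 * ε) - volume (Set.Icc (x₀ - ε) (x₀ + ε) ∩ A) := by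
      rw [← hsum, ENNReal.add_sub_cancel_left hfin]
    rw [hb]
    calc ENNReal.ofReal (2 * ε) - volume (Set.Icc (x₀ - ε) (x₀ + ε) ∩ A)
        ≤ ENNReal.ofReal (2 * ε)
          - (ENNReal.ofReal (2 * ε) - ENNReal.ofReal (η * (2 * ε))) := by
          apply tsub_le_tsub_left
          rw [← hsubmul]; exact hlow
      _ ≤ ENNReal.ofReal (η * (2 * ε)) := tsub_tsub_le
  -- Step C: IVT image bound
  have hIVT : Set.uIcc (g x₀) (g (x₀ + ε)) ⊆ g '' Set.Icc x₀ (x₀ + ε) := by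
    have hcont : ContinuousOn g (Set.uIcc x₀ (x₀ + ε)) :=
      hg.continuous.continuousOn
    have := intermediate_value_uIcc hcont
    rwa [Set.uIcc_of_le (by linarith : x₀ ≤ x₀ + ε)] at this
  have huIccvol : ENNReal.ofReal (κ * ε) ≤ volume (Set.uIcc (g x₀) (g (x₀ + ε))) := by
    rw [Set.uIcc, Real.volume_Icc]
    apply ENNReal.ofReal_le_ofReal
    have habs : |g (x₀ + ε) - g x₀| ≥ κ * ε := by
      have := hexp (x₀ + ε) (by rw [add_sub_cancel_left, abs_of_pos hεpos])
      rwa [add_sub_cancel_left, abs_of_pos hεpos] at this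
    rcases abs_cases (g (x₀ + ε) - g x₀) with ⟨h1, h2⟩ | ⟨h1, h2⟩ <;>
      · simp only [max_def, min_def]
        split_ifs <;> linarith
  -- Lipschitz image measure bound
  have himg : ∀ T : Set ℝ, volume (g '' T) ≤ (L : ℝ≥0∞) * volume T := by
    intro T
    have h := hg.hausdorffMeasure_image_le (d := 1) (by norm_num) T
    rwa [MeasureTheory.hausdorffMeasure_real, ENNReal.rpow_one] at h
  -- Conclusion
  rw [pos_iff_ne_zero]
  intro hzero
  have hsubset : Set.Icc x₀ (x₀ + ε) ⊆ S ∪ (Set.Icc (x₀ - ε) (x₀ + ε) \ A) := by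
    intro x hx
    have hx' : x ∈ Set.Icc (x₀ - ε) (x₀ + ε) := ⟨by linarith [hx.1], hx.2⟩
    by_cases hxA : x ∈ A
    · exact Or.inl ⟨hxA, hx'⟩
    · exact Or.inr ⟨hx', hxA⟩
  have hchain : ENNReal.ofReal (κ * ε) ≤ (L : ℝ≥0∞) * ENNReal.ofReal (η * (2 * ε)) := by
    calc ENNReal.ofReal (κ * ε)
        ≤ volume (Set.uIcc (g x₀) (g (x₀ + ε))) := huIccvol
      _ ≤ volume (g '' Set.Icc x₀ (x₀ + ε)) := measure_mono hIVT
      _ ≤ volume (g '' S ∪ g '' (Set.Icc (x₀ - ε) (x₀ + ε) \ A)) := by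
          apply measure_mono
          rw [← Set.image_union]
          exact Set.image_mono hsubset
      _ ≤ volume (g '' S) + volume (g '' (Set.Icc (x₀ - ε) (x₀ + ε) \ A)) :=
          measure_union_le _ _
      _ = volume (g '' (Set.Icc (x₀ - ε) (x₀ + ε) \ A)) := by
          rw [hzero, zero_add]
      _ ≤ (L : ℝ≥0∞) * volume (Set.Icc (x₀ - ε) (x₀ + ε) \ A) := himg _
      _ ≤ (L : ℝ≥0∞) * ENNReal.ofReal (η * (2 * ε)) := by
          exact mul_le_mul_right hcompl _
  have hreal : κ * ε ≤ (L : ℝ) * (η * (2 * ε)) := by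
    have : (L : ℝ≥0∞) * ENNReal.ofReal (η * (2 * ε))
        = ENNReal.ofReal ((L : ℝ) * (η * (2 * ε))) := by
      rw [ENNReal.ofReal_mul hLnn, ENNReal.ofReal_coe_nnreal]
    rw [this] at hchain
    exact (ENNReal.ofReal_le_ofReal_iff (by positivity)).mp hchain
  have hη' : η * (4 * ((L : ℝ) + 1)) = κ := by
    rw [hηdef]; field_simp
  have hkey : κ * ε * (2 * ((L : ℝ) + 1))
      ≤ (L : ℝ) * (η * (2 * ε)) * (2 * ((L : ℝ) + 1)) :=
    mul_le_mul_of_nonneg_right hreal (by positivity)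
  have e2 : (L : ℝ) * (η * (2 * ε)) * (2 * ((L : ℝ) + 1))
      = (L : ℝ) * ε * (η * (4 * ((L : ℝ) + 1))) := by ring
  rw [hη'] at e2
  nlinarith [hkey, e2, mul_pos hκ hεpos, hLnn,
    mul_nonneg (mul_pos hκ hεpos).le hLnn]
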